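/- arXiv:2206.05890 — 5 statements merged into one kernel-verified Lean document; each statement's English description precedes it below -/
import Mathlib

section
/- Let q be a real number with q > 0 and q ≠ 1, let k ≥ 1 and x ≥ 1 be natural numbers, and let r_1, …, r_k ≥ 1 be natural numbers. Then the q-multinomial coefficient satisfies the recurrence C_q(x; r_1,…,r_k) = C_q(x−1; r_1,…,r_k) + Σ_{j=1}^{k} q^{x−m_j} · C_q(x−1; r_1,…,r_{j−1}, r_j−1, r_{j+1},…,r_k), where m_j = r_j + r_{j+1} + ⋯ + r_k. -/
noncomputable def qNum (q : ℝ) (m : ℤ) : ℝ := (1 - q ^ m) / (1 - q)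

noncomputable def qFactorial (q : ℝ) (n : ℕ) : ℝ :=
  ∏ i ∈ Finset.range n, qNum q ((i : ℤ) + 1)

noncomputable def qFacOrd (q : ℝ) (x : ℤ) (r : ℕ) : ℝ :=
  ∏ i ∈ Finset.range r, qNum q (x - (i : ℤ))

noncomputable def qMultinomial (q : ℝ) (x : ℤ) {k : ℕ} (r : Fin k → ℕ) : ℝ :=
  qFacOrd q x (∑ j, r j) / ∏ j, qFactorial q (r j)

lemma qNum_ne_zero {q : ℝ} (hq : 0 < q) (hq1 : q ≠ 1) {m : ℤ} (hm : m ≠ 0) :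
    qNum q m ≠ 0 := by
  have h1 : (1 : ℝ) - q ≠ 0 := sub_ne_zero.mpr (Ne.symm hq1)
  have h2 : q ^ m ≠ 1 := by
    intro h
    exact hm (zpow_right_injective₀ hq hq1 (by simpa using h))
  exact div_ne_zero (sub_ne_zero.mpr (Ne.symm h2)) h1

lemma qFactorial_ne_zero {q : ℝ} (hq : 0 < q) (hq1 : q ≠ 1) (n : ℕ) :
    qFactorial q n ≠ 0 := by
  unfold qFactorial
  exact Finset.prod_ne_zero_iff.2 fun i _ => qNum_ne_zero hq hq1 (by omega)

lemma qFacOrd_succ_left (q : ℝ) (x : ℤ) (n : ℕ) :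
    qFacOrd q x (n + 1) = qNum q x * qFacOrd q (x - 1) n := by
  unfold qFacOrd
  rw [Finset.prod_range_succ', mul_comm]
  have h0 : qNum q (x - ((0 : ℕ) : ℤ)) = qNum q x := by norm_num
  rw [h0]
  congr 1
  exact Finset.prod_congr rfl fun i _ => by congr 1; push_cast; ring

lemma qFacOrd_succ (q : ℝ) (x : ℤ) (n : ℕ) :
    qFacOrd q x (n + 1) = qFacOrd q x n * qNum q (x - n) := by
  unfold qFacOrd
  rw [Finset.prod_range_succ]

lemma qFactorial_succ (q : ℝ) (n : ℕ) :
    qFactorial q (n + 1) = qFactorial q n * qNum q ((n : ℤ) + 1) := by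
  unfold qFactorial
  rw [Finset.prod_range_succ]

/-- the scalar telescoping identity: [x] = [x-s] + Σ_j q^(x-m_j)[r_j]. -/
lemma qNum_key (q : ℝ) (hq : 0 < q) (hq1 : q ≠ 1) (x : ℤ) (k : ℕ) (r : Fin k → ℕ) :
    qNum q x = qNum q (x - ∑ j, (r j : ℤ)) +
      ∑ j : Fin k,
        q ^ (x - ∑ i ∈ Finset.univ.filter (fun i => j ≤ i), (r i : ℤ)) * qNum q (r j) := by
  have hq0 : q ≠ 0 := hq.ne'
  have h1 : (1 : ℝ) - q ≠ 0 := sub_ne_zero.mpr (Ne.symm hq1)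
  set R : ℕ → ℤ := fun i => if h : i < k then (r ⟨i, h⟩ : ℤ) else 0 with hR
  have hRval : ∀ i : Fin k, R (i : ℕ) = (r i : ℤ) := by
    intro i
    show (if h : (i : ℕ) < k then (r ⟨(i : ℕ), h⟩ : ℤ) else 0) = (r i : ℤ)
    rw [dif_pos i.isLt]
  set G : ℕ → ℤ := fun t => ∑ i ∈ Finset.Ico t k, R i with hG
  have hM : ∀ j : Fin k,
      (∑ i ∈ Finset.univ.filter (fun i => j ≤ i), (r i : ℤ)) = G (j : ℕ) := by
    intro j
    rw [Finset.sum_filter]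
    have h5 : ∀ i : Fin k,
        (if j ≤ i then (r i : ℤ) else 0) =
          (fun n => if (j : ℕ) ≤ n then R n else 0) (i : ℕ) := by
      intro i
      simp only [Fin.le_def, hRval]
    rw [Finset.sum_congr rfl fun i _ => h5 i,
      Fin.sum_univ_eq_sum_range (fun n => if (j : ℕ) ≤ n then R n else 0) k,
      ← Finset.sum_filter]
    have hfil : (Finset.range k).filter (fun n => (j : ℕ) ≤ n) = Finset.Ico (j : ℕ) k := by
      ext n
      simp [Finset.mem_Ico, and_comm]
    rw [hfil]
  have hG0 : G 0 = ∑ j, (r j : ℤ) := by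
    rw [show G 0 = ∑ i ∈ Finset.Ico 0 k, R i from rfl, ← Finset.range_eq_Ico,
      ← Fin.sum_univ_eq_sum_range R k]
    exact Finset.sum_congr rfl fun i _ => hRval i
  have hGk : G k = 0 := by
    rw [show G k = ∑ i ∈ Finset.Ico k k, R i from rfl, Finset.Ico_self, Finset.sum_empty]
  have hGstep : ∀ j : Fin k, G (j : ℕ) = (r j : ℤ) + G ((j : ℕ) + 1) := by
    intro j
    rw [show G (j : ℕ) = ∑ i ∈ Finset.Ico (j : ℕ) k, R i from rfl,
      Finset.sum_eq_sum_Ico_succ_bot j.isLt R, hRval j]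
  set F : ℕ → ℝ := fun t => q ^ (x - G t) / (1 - q) with hF
  have hterm : ∀ j : Fin k,
      q ^ (x - ∑ i ∈ Finset.univ.filter (fun i => j ≤ i), (r i : ℤ)) * qNum q (r j) =
        F (j : ℕ) - F ((j : ℕ) + 1) := by
    intro j
    rw [hM j]
    simp only [hF]
    simp only [qNum]
    have h2 : x - G (j : ℕ) + (r j : ℤ) = x - G ((j : ℕ) + 1) := by
      rw [hGstep j]; ring
    have h3 : q ^ (x - G ((j : ℕ) + 1)) = q ^ (x - G (j : ℕ)) * q ^ ((r j : ℤ)) := by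
      rw [← zpow_add₀ hq0, h2]
    rw [h3]
    field_simp
    try ring
  rw [Finset.sum_congr rfl fun j _ => hterm j]
  have htel : ∑ j : Fin k, (F (j : ℕ) - F ((j : ℕ) + 1)) = F 0 - F k := by
    rw [Fin.sum_univ_eq_sum_range (fun t => F t - F (t + 1)) k, Finset.sum_range_sub' F k]
  rw [htel]
  simp only [hF]
  simp only [hGk, hG0]
  simp only [qNum, zpow_zero]
  field_simp
  try ring

/-- q-multinomial recurrence: C_q(x; r) = C_q(x−1; r) + Σ_j q^(x−m_j) C_q(x−1; r with r_j−1),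
    m_j = r_j + ⋯ + r_k. -/
theorem qMultinomial_recurrence (q : ℝ) (hq : 0 < q) (hq1 : q ≠ 1)
    (k x : ℕ) (hk : 1 ≤ k) (hx : 1 ≤ x) (r : Fin k → ℕ) (hr : ∀ j, 1 ≤ r j) :
    qMultinomial q (x : ℤ) r =
      qMultinomial q ((x : ℤ) - 1) r +
      ∑ j : Fin k,
        q ^ ((x : ℤ) - ∑ i ∈ Finset.univ.filter (fun i => j ≤ i), (r i : ℤ)) *
          qMultinomial q ((x : ℤ) - 1) (Function.update r j (r j - 1)) := by
  have hq0 : q ≠ 0 := hq.ne'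
  have hs : 1 ≤ ∑ j, r j := le_trans (hr ⟨0, hk⟩)
    (Finset.single_le_sum (f := r) (fun i _ => Nat.zero_le _) (Finset.mem_univ _))
  set s : ℕ := ∑ j, r j with hsdef
  set D : ℝ := ∏ j, qFactorial q (r j) with hDdef
  have hD : D ≠ 0 := Finset.prod_ne_zero_iff.2 fun j _ => qFactorial_ne_zero hq hq1 _
  set P : ℝ := qFacOrd q ((x : ℤ) - 1) (s - 1) with hPdef
  have hnum1 : qFacOrd q (x : ℤ) s = qNum q (x : ℤ) * P := by
    rw [hPdef, ← qFacOrd_succ_left q (x : ℤ) (s - 1), Nat.sub_add_cancel hs]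
  have hnum2 : qFacOrd q ((x : ℤ) - 1) s = P * qNum q ((x : ℤ) - (s : ℤ)) := by
    conv_lhs => rw [← Nat.sub_add_cancel hs]
    rw [qFacOrd_succ]
    have h7 : ((x : ℤ) - 1) - ((s - 1 : ℕ) : ℤ) = (x : ℤ) - (s : ℤ) := by
      rw [Nat.cast_sub hs]
      push_cast
      ring
    rw [h7, hPdef]
  have hupd : ∀ j : Fin k,
      qMultinomial q ((x : ℤ) - 1) (Function.update r j (r j - 1)) =
        P * qNum q ((r j : ℤ)) / D := by
    intro j
    have hc : qNum q ((r j : ℤ)) ≠ 0 :=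
      qNum_ne_zero hq hq1 (by exact_mod_cast Nat.one_le_iff_ne_zero.mp (hr j))
    unfold qMultinomial
    have hsum : (∑ i, Function.update r j (r j - 1) i) = s - 1 := by
      rw [Finset.sum_update_of_mem (Finset.mem_univ j), ← Finset.erase_eq]
      have h2 : r j + ∑ i ∈ Finset.univ.erase j, r i = s := by
        rw [hsdef]; exact Finset.add_sum_erase _ r (Finset.mem_univ j)
      have h3 := hr j
      generalize (∑ i ∈ Finset.univ.erase j, r i) = t at h2 ⊢
      omega
    have hprod : (∏ i, qFactorial q (Function.update r j (r j - 1) i)) * qNum q ((r j : ℤ)) = D := by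
      rw [← Finset.mul_prod_erase _
        (fun i => qFactorial q (Function.update r j (r j - 1) i)) (Finset.mem_univ j)]
      have he : (∏ i ∈ Finset.univ.erase j, qFactorial q (Function.update r j (r j - 1) i)) =
          ∏ i ∈ Finset.univ.erase j, qFactorial q (r i) :=
        Finset.prod_congr rfl fun i hi => by
          rw [Function.update_of_ne (Finset.ne_of_mem_erase hi)]
      have h8 : qFactorial q (r j) = qFactorial q (r j - 1) * qNum q ((r j : ℤ)) := by
        conv_lhs => rw [← Nat.sub_add_cancel (hr j)]
        rw [qFactorial_succ]
        have h9 : ((r j - 1 : ℕ) : ℤ) + 1 = (r j : ℤ) := by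
          rw [Nat.cast_sub (hr j)]
          push_cast
          ring
        rw [h9]
      rw [he, Function.update_self, hDdef,
        ← Finset.mul_prod_erase _ (fun i => qFactorial q (r i)) (Finset.mem_univ j), h8]
      ring
    rw [hsum, ← hPdef, ← hprod]
    exact (mul_div_mul_right P _ hc).symm
  simp only [hupd]
  unfold qMultinomial
  rw [← hsdef, ← hDdef, hnum1, hnum2]
  have hcast : ((s : ℕ) : ℤ) = ∑ j, (r j : ℤ) := by
    rw [hsdef]; push_cast; rfl
  have key := qNum_key q hq hq1 (x : ℤ) k r
  rw [← hcast] at key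
  rw [key, add_mul, add_div]
  congr 1
  · ring
  · rw [Finset.sum_mul, Finset.sum_div]
    exact Finset.sum_congr rfl fun j _ => by ring
end

section
/- Let p and q be positive real numbers with p ≠ q, let k ≥ 1 and x be natural numbers, and let r_1, …, r_k be natural numbers. Then the (p,q)-multinomial coefficient with inverted parameters satisfies C_{p^{-1},q^{-1}}(x; r_1,…,r_k) = (pq)^{−Σ_{j=1}^k r_j (x − m_j)} · C_{p,q}(x; r_1,…,r_k), and moreover Σ_{j=1}^k r_j (x − m_j) = Σ_{j=1}^k r_j (x − s_j), where s_j = r_1+⋯+r_j and m_j = r_j+⋯+r_k. -/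
noncomputable def pqNum (p q : ℝ) (m : ℤ) : ℝ := (p ^ m - q ^ m) / (p - q)

noncomputable def pqFactorial (p q : ℝ) (n : ℕ) : ℝ :=
  ∏ i ∈ Finset.range n, pqNum p q ((i : ℤ) + 1)

noncomputable def pqFacOrd (p q : ℝ) (x : ℤ) (r : ℕ) : ℝ :=
  ∏ i ∈ Finset.range r, pqNum p q (x - (i : ℤ))

noncomputable def pqMultinomial (p q : ℝ) (x : ℤ) {k : ℕ} (r : Fin k → ℕ) : ℝ :=
  pqFacOrd p q x (∑ j, r j) / ∏ j, pqFactorial p q (r j)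

noncomputable def pqBinomial (p q : ℝ) (x : ℤ) (r : ℕ) : ℝ :=
  pqFacOrd p q x r / pqFactorial p q r

open Finset

lemma pqNum_inv (p q : ℝ) (hp : 0 < p) (hq : 0 < q) (hpq : p ≠ q) (m : ℤ) :
    pqNum p⁻¹ q⁻¹ m = (p * q) ^ (1 - m) * pqNum p q m := by
  have hp0 : p ≠ 0 := hp.ne'
  have hq0 : q ≠ 0 := hq.ne'
  have ha : p ^ m ≠ 0 := zpow_ne_zero m hp0
  have hb : q ^ m ≠ 0 := zpow_ne_zero m hq0
  have hpq' : p - q ≠ 0 := sub_ne_zero.mpr hpq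
  have hpq'' : p⁻¹ - q⁻¹ ≠ 0 := sub_ne_zero.mpr (fun h => hpq (inv_injective h))
  unfold pqNum
  rw [inv_zpow, inv_zpow, zpow_sub₀ (by positivity), zpow_one, mul_zpow,
    inv_sub_inv ha hb, inv_sub_inv hp0 hq0]
  have hqp : q - p ≠ 0 := sub_ne_zero.mpr (Ne.symm hpq)
  field_simp
  ring

lemma prod_zpow₀ {ι : Type*} (a : ℝ) (ha : a ≠ 0) (s : Finset ι) (f : ι → ℤ) :
    ∏ i ∈ s, a ^ f i = a ^ (∑ i ∈ s, f i) := by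
  induction s using Finset.cons_induction with
  | empty => simp
  | cons i s hi ih => rw [prod_cons, sum_cons, ih, zpow_add₀ ha]

lemma two_gauss (n : ℕ) : 2 * ∑ i ∈ Finset.range n, (i : ℤ) = n * (n - 1) := by
  induction n with
  | zero => simp
  | succ n ih => rw [Finset.sum_range_succ]; push_cast; push_cast at ih; linear_combination ih

/-- Inversion formula for (p,q)-multinomial coefficients:
    C_{p⁻¹,q⁻¹}(x; r) = (pq)^(−Σ_j r_j (x − m_j)) C_{p,q}(x; r),
    and Σ_j r_j (x − m_j) = Σ_j r_j (x − s_j). -/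
theorem pqMultinomial_inv (p q : ℝ) (hp : 0 < p) (hq : 0 < q) (hpq : p ≠ q)
    (k x : ℕ) (hk : 1 ≤ k) (r : Fin k → ℕ) :
    pqMultinomial p⁻¹ q⁻¹ (x : ℤ) r =
      (p * q) ^
          (-(∑ j : Fin k, (r j : ℤ) *
              ((x : ℤ) - ∑ i ∈ Finset.univ.filter (fun i => j ≤ i), (r i : ℤ)))) *
        pqMultinomial p q (x : ℤ) r ∧
    (∑ j : Fin k, (r j : ℤ) *
        ((x : ℤ) - ∑ i ∈ Finset.univ.filter (fun i => j ≤ i), (r i : ℤ))) =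
      ∑ j : Fin k, (r j : ℤ) *
        ((x : ℤ) - ∑ i ∈ Finset.univ.filter (fun i => i ≤ j), (r i : ℤ)) := by
  have hp0 : p ≠ 0 := hp.ne'
  have hq0 : q ≠ 0 := hq.ne'
  have hpq0 : p * q ≠ 0 := mul_ne_zero hp0 hq0
  -- abbreviations
  set S : ℕ := ∑ j, r j with hS
  have hS' : (S : ℤ) = ∑ j, (r j : ℤ) := by rw [hS]; push_cast; rfl
  -- the two partial-sum functions
  have key : (∑ j : Fin k, (r j : ℤ) * ∑ i ∈ Finset.univ.filter (fun i => j ≤ i), (r i : ℤ))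
      = ∑ j : Fin k, (r j : ℤ) * ∑ i ∈ Finset.univ.filter (fun i => i ≤ j), (r i : ℤ) := by
    simp only [Finset.mul_sum]
    rw [Finset.sum_comm' (s := Finset.univ)
      (t := fun j => Finset.univ.filter (fun i => j ≤ i)) (t' := Finset.univ)
      (s' := fun i => Finset.univ.filter (fun j => j ≤ i))
      (by intro a b; simp [Finset.mem_filter])]
    apply Finset.sum_congr rfl
    intro j _
    apply Finset.sum_congr rfl
    intro i _
    ring
  have msum : ∀ j : Fin k,
      (∑ i ∈ Finset.univ.filter (fun i => j ≤ i), (r i : ℤ)) +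
      (∑ i ∈ Finset.univ.filter (fun i => i ≤ j), (r i : ℤ)) =
      (∑ i, (r i : ℤ)) + r j := by
    intro j
    rw [Finset.sum_filter, Finset.sum_filter, ← Finset.sum_add_distrib]
    have hrj : ((∑ i, (r i : ℤ)) + r j)
        = ∑ i, ((r i : ℤ) + if i = j then (r i : ℤ) else 0) := by
      rw [Finset.sum_add_distrib, Finset.sum_ite_eq' Finset.univ j fun i => (r i : ℤ)]
      simp
    rw [hrj]
    apply Finset.sum_congr rfl
    intro i _
    by_cases h1 : j ≤ i
    · by_cases h2 : i ≤ j
      · have h3 : i = j := le_antisymm h2 h1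
        simp [h1, h2, h3]
      · have h3 : i ≠ j := fun h => h2 (le_of_eq h)
        simp [h1, h2, h3]
    · have h2 : i ≤ j := le_of_not_ge h1
      have h3 : i ≠ j := fun h => h1 (le_of_eq h.symm)
      simp [h1, h2, h3]
  -- second conjunct
  have conj2 : (∑ j : Fin k, (r j : ℤ) *
        ((x : ℤ) - ∑ i ∈ Finset.univ.filter (fun i => j ≤ i), (r i : ℤ))) =
      ∑ j : Fin k, (r j : ℤ) *
        ((x : ℤ) - ∑ i ∈ Finset.univ.filter (fun i => i ≤ j), (r i : ℤ)) := by
    simp only [mul_sub]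
    rw [Finset.sum_sub_distrib, Finset.sum_sub_distrib, key]
  refine ⟨?_, conj2⟩
  -- first conjunct
  have hC : pqFacOrd p⁻¹ q⁻¹ (x : ℤ) S
      = (p * q) ^ (∑ i ∈ Finset.range S, (1 - ((x : ℤ) - i))) * pqFacOrd p q (x : ℤ) S := by
    unfold pqFacOrd
    rw [← prod_zpow₀ _ hpq0, ← Finset.prod_mul_distrib]
    exact Finset.prod_congr rfl fun i _ => pqNum_inv p q hp hq hpq _
  have hD : ∀ n : ℕ, pqFactorial p⁻¹ q⁻¹ n
      = (p * q) ^ (-∑ i ∈ Finset.range n, (i : ℤ)) * pqFactorial p q n := by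
    intro n
    unfold pqFactorial
    rw [← Finset.sum_neg_distrib, ← prod_zpow₀ _ hpq0, ← Finset.prod_mul_distrib]
    apply Finset.prod_congr rfl
    intro i _
    rw [pqNum_inv p q hp hq hpq]
    norm_num
  have hProd : ∏ j, pqFactorial p⁻¹ q⁻¹ (r j)
      = (p * q) ^ (∑ j, -∑ i ∈ Finset.range (r j), (i : ℤ)) * ∏ j, pqFactorial p q (r j) := by
    rw [← prod_zpow₀ _ hpq0, ← Finset.prod_mul_distrib]
    exact Finset.prod_congr rfl fun j _ => hD (r j)
  unfold pqMultinomial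
  rw [show (∑ j, r j) = S from rfl, hC, hProd, mul_div_mul_comm, ← zpow_sub₀ hpq0]
  congr 2
  -- exponent identity
  have hA : (∑ i ∈ Finset.range S, (1 - ((x : ℤ) - i)))
      = (S : ℤ) * (1 - (x : ℤ)) + ∑ i ∈ Finset.range S, (i : ℤ) := by
    rw [Finset.sum_sub_distrib, Finset.sum_sub_distrib, Finset.sum_const, Finset.sum_const,
      Finset.card_range]
    push_cast
    ring
  have hU : ∑ j, -∑ i ∈ Finset.range (r j), (i : ℤ) = -∑ j, ∑ i ∈ Finset.range (r j), (i : ℤ) :=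
    Finset.sum_neg_distrib _
  have hE : (∑ j : Fin k, (r j : ℤ) *
        ((x : ℤ) - ∑ i ∈ Finset.univ.filter (fun i => j ≤ i), (r i : ℤ)))
      = (x : ℤ) * (∑ j, (r j : ℤ))
        - ∑ j : Fin k, (r j : ℤ) * ∑ i ∈ Finset.univ.filter (fun i => j ≤ i), (r i : ℤ) := by
    simp only [mul_sub]
    rw [Finset.sum_sub_distrib, ← Finset.sum_mul]
    ring
  have h2m : 2 * ∑ j : Fin k, (r j : ℤ) * ∑ i ∈ Finset.univ.filter (fun i => j ≤ i), (r i : ℤ)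
      = (∑ j, (r j : ℤ)) * (∑ j, (r j : ℤ)) + ∑ j, (r j : ℤ) * (r j : ℤ) := by
    have e1 : 2 * ∑ j : Fin k, (r j : ℤ) * ∑ i ∈ Finset.univ.filter (fun i => j ≤ i), (r i : ℤ)
        = (∑ j : Fin k, (r j : ℤ) * ∑ i ∈ Finset.univ.filter (fun i => j ≤ i), (r i : ℤ))
          + ∑ j : Fin k, (r j : ℤ) * ∑ i ∈ Finset.univ.filter (fun i => i ≤ j), (r i : ℤ) := by
      rw [← key]; ring
    rw [e1, ← Finset.sum_add_distrib]
    have e2 : ∀ j ∈ Finset.univ, ((r j : ℤ) * ∑ i ∈ Finset.univ.filter (fun i => j ≤ i), (r i : ℤ))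
        + (r j : ℤ) * ∑ i ∈ Finset.univ.filter (fun i => i ≤ j), (r i : ℤ)
        = (r j : ℤ) * (∑ i, (r i : ℤ)) + (r j : ℤ) * (r j : ℤ) := by
      intro j _
      rw [← mul_add, msum j]
      ring
    rw [Finset.sum_congr rfl e2, Finset.sum_add_distrib, ← Finset.sum_mul]
  have h2T : 2 * ∑ i ∈ Finset.range S, (i : ℤ) = (S : ℤ) * ((S : ℤ) - 1) := two_gauss S
  have h2U : 2 * ∑ j, ∑ i ∈ Finset.range (r j), (i : ℤ)
      = (∑ j, (r j : ℤ) * (r j : ℤ)) - ∑ j, (r j : ℤ) := by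
    rw [Finset.mul_sum, ← Finset.sum_sub_distrib]
    exact Finset.sum_congr rfl fun j _ => by rw [two_gauss]; ring
  rw [hA, hU, hE, hS']
  have h2 : 2 * ((∑ j, (r j : ℤ)) * (1 - (x : ℤ)) + (∑ i ∈ Finset.range S, (i : ℤ))
        - -∑ j, ∑ i ∈ Finset.range (r j), (i : ℤ))
      = 2 * (-((x : ℤ) * (∑ j, (r j : ℤ))
        - ∑ j : Fin k, (r j : ℤ) * ∑ i ∈ Finset.univ.filter (fun i => j ≤ i), (r i : ℤ))) := by
    rw [hS'] at h2T
    linear_combination h2T + h2U - h2m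
  exact mul_left_cancel₀ two_ne_zero h2
end

section
/- Let q be a real number with q > 0 and q ≠ 1, let k ≥ 1 and x ≥ 1 be natural numbers, and let r_1, …, r_k ≥ 1 be natural numbers with s_k = r_1 + ⋯ + r_k. Then the q-factorial of order s_k satisfies [x]_{s_k, q} = [x−1]_{s_k, q} + Σ_{j=1}^{k} q^{x − m_j} · [r_j]_q · [x−1]_{s_k − 1, q}, where m_j = r_j + ⋯ + r_k. -/
/-- q-factorial-of-order recursion:
    [x]_{s_k,q} = [x−1]_{s_k,q} + Σ_j q^(x−m_j) [r_j]_q [x−1]_{s_k−1,q}, m_j = r_j + ⋯ + r_k. -/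
theorem qFacOrd_recurrence (q : ℝ) (hq : 0 < q) (hq1 : q ≠ 1)
    (k x : ℕ) (hk : 1 ≤ k) (hx : 1 ≤ x) (r : Fin k → ℕ) (hr : ∀ j, 1 ≤ r j) :
    qFacOrd q (x : ℤ) (∑ i, r i) =
      qFacOrd q ((x : ℤ) - 1) (∑ i, r i) +
      ∑ j : Fin k,
        q ^ ((x : ℤ) - ∑ i ∈ Finset.univ.filter (fun i => j ≤ i), (r i : ℤ)) *
          qNum q (r j) * qFacOrd q ((x : ℤ) - 1) ((∑ i, r i) - 1) := by
  have hq0 : q ≠ 0 := ne_of_gt hq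
  have h1q : 1 - q ≠ 0 := sub_ne_zero.mpr (Ne.symm hq1)
  set s := ∑ i, r i with hs_def
  have hs : 1 ≤ s := by
    calc 1 ≤ r ⟨0, hk⟩ := hr _
    _ ≤ s := Finset.single_le_sum (f := fun i => r i)
        (fun i _ => Nat.zero_le _) (Finset.mem_univ _)
  obtain ⟨t, ht⟩ : ∃ t, s = t + 1 := ⟨s - 1, by omega⟩
  have hst : s - 1 = t := by omega
  -- Step 1: peel the first factor
  have h1 : qFacOrd q (x : ℤ) s = qNum q (x : ℤ) * qFacOrd q ((x : ℤ) - 1) t := by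
    rw [ht]
    simp only [qFacOrd, Finset.prod_range_succ']
    rw [mul_comm]
    have hc : ∀ i ∈ Finset.range t,
        qNum q ((x : ℤ) - ((i : ℕ) + 1 : ℕ)) = qNum q ((x : ℤ) - 1 - (i : ℤ)) := by
      intro i _
      congr 1
      push_cast
      ring
    rw [Finset.prod_congr rfl hc]
    norm_num
  -- Step 2: peel the last factor
  have h2 : qFacOrd q ((x : ℤ) - 1) s
      = qFacOrd q ((x : ℤ) - 1) t * qNum q ((x : ℤ) - (s : ℤ)) := by
    rw [ht]
    simp only [qFacOrd, Finset.prod_range_succ]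
    congr 2
    push_cast [ht]; ring
  -- tail sums
  set N : ℕ → ℤ := fun n => ∑ i ∈ Finset.univ.filter (fun i : Fin k => n ≤ (i : ℕ)), (r i : ℤ)
    with hN_def
  have hN0 : N 0 = (s : ℤ) := by
    simp only [hN_def]
    rw [Finset.filter_true_of_mem (fun i _ => Nat.zero_le _), hs_def]
    exact (Nat.cast_sum _ _).symm
  have hNk : N k = 0 := by
    simp only [hN_def]
    rw [Finset.filter_false_of_mem, Finset.sum_empty]
    intro i _
    exact Nat.not_le.mpr i.isLt
  have hNstep : ∀ j : Fin k, N j = (r j : ℤ) + N ((j : ℕ) + 1) := by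
    intro j
    have hins : (Finset.univ.filter (fun i : Fin k => (j : ℕ) ≤ (i : ℕ)))
        = insert j (Finset.univ.filter (fun i : Fin k => (j : ℕ) + 1 ≤ (i : ℕ))) := by
      ext i
      simp only [Finset.mem_filter, Finset.mem_univ, true_and, Finset.mem_insert]
      constructor
      · intro h
        rcases Nat.eq_or_lt_of_le h with h' | h'
        · left; exact (Fin.ext h'.symm)
        · right; omega
      · rintro (rfl | h) <;> omega
    have hnot : j ∉ (Finset.univ.filter (fun i : Fin k => (j : ℕ) + 1 ≤ (i : ℕ))) := by
      simp
    simp only [hN_def]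
    rw [hins, Finset.sum_insert hnot]
  -- Step 3: telescoping sum
  have h4 : ∑ j : Fin k,
      q ^ ((x : ℤ) - ∑ i ∈ Finset.univ.filter (fun i => j ≤ i), (r i : ℤ)) * qNum q (r j)
      = (q ^ ((x : ℤ) - (s : ℤ)) - q ^ (x : ℤ)) / (1 - q) := by
    have key : ∀ j : Fin k,
        q ^ ((x : ℤ) - ∑ i ∈ Finset.univ.filter (fun i => j ≤ i), (r i : ℤ)) * qNum q (r j)
        = (q ^ ((x : ℤ) - N (j : ℕ)) - q ^ ((x : ℤ) - N ((j : ℕ) + 1))) / (1 - q) := by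
      intro j
      have hfe : (Finset.univ.filter (fun i => j ≤ i))
          = (Finset.univ.filter (fun i : Fin k => (j : ℕ) ≤ (i : ℕ))) := rfl
      have hexp : ((x : ℤ) - N ((j : ℕ) + 1)) = ((x : ℤ) - N (j : ℕ)) + (r j : ℤ) := by
        have := hNstep j; omega
      rw [hfe]
      show q ^ ((x : ℤ) - N (j : ℕ)) * qNum q (r j) = _
      rw [hexp, zpow_add₀ hq0, qNum]
      field_simp
    rw [Finset.sum_congr rfl (fun j _ => key j)]
    rw [Fin.sum_univ_eq_sum_range
      (fun n => (q ^ ((x : ℤ) - N n) - q ^ ((x : ℤ) - N (n + 1))) / (1 - q)) k]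
    rw [← Finset.sum_div, Finset.sum_range_sub' (fun n => q ^ ((x : ℤ) - N n)) k]
    rw [hN0, hNk, sub_zero]
  -- combine
  rw [h1, h2, hst]
  have hsum : ∑ j : Fin k,
      q ^ ((x : ℤ) - ∑ i ∈ Finset.univ.filter (fun i => j ≤ i), (r i : ℤ)) *
        qNum q (r j) * qFacOrd q ((x : ℤ) - 1) t
      = ((q ^ ((x : ℤ) - (s : ℤ)) - q ^ (x : ℤ)) / (1 - q)) * qFacOrd q ((x : ℤ) - 1) t := by
    rw [← Finset.sum_mul, h4]
  rw [hsum]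
  have hnum : qNum q (x : ℤ)
      = qNum q ((x : ℤ) - (s : ℤ)) + (q ^ ((x : ℤ) - (s : ℤ)) - q ^ (x : ℤ)) / (1 - q) := by
    simp only [qNum]
    rw [← add_div]
    congr 1
    ring
  rw [hnum]
  ring
end

section
/- Let q be a real number with q > 0 and q ≠ 1, let k ≥ 1 and x ≥ 1 be natural numbers, and let r_1, …, r_k ≥ 1 be natural numbers with s_k = r_1 + ⋯ + r_k. Then the q-factorial of order s_k satisfies [x]_{s_k, q} = q^{s_k} · [x−1]_{s_k, q} + Σ_{j=1}^{k} q^{s_{j−1}} · [r_j]_q · [x−1]_{s_k − 1, q}, where s_j = r_1 + ⋯ + r_j and s_0 = 0. -/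
lemma qNum_add (q : ℝ) (hq : q ≠ 0) (a b : ℕ) :
    qNum q ((a + b : ℕ) : ℤ) = qNum q a + q ^ a * qNum q b := by
  unfold qNum
  rw [← mul_div_assoc, ← add_div]
  congr 1
  push_cast
  rw [zpow_add₀ hq, zpow_natCast, zpow_natCast]
  ring

lemma tel (q : ℝ) (hq : q ≠ 0) (k : ℕ) (f : ℕ → ℕ) :
    ∑ j ∈ Finset.range k, q ^ (∑ i ∈ Finset.range j, f i) * qNum q (f j)
      = qNum q ((∑ i ∈ Finset.range k, f i : ℕ) : ℤ) := by
  induction k with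
  | zero => simp [qNum]
  | succ n ih =>
      rw [Finset.sum_range_succ, Finset.sum_range_succ (f := f), qNum_add q hq, ih]

lemma filter_sum_eq (k : ℕ) (r : Fin k → ℕ) (p : Fin k) :
    ∑ i ∈ Finset.univ.filter (fun i => i < p), r i
      = ∑ i ∈ Finset.range p.val, (fun n => if h : n < k then r ⟨n, h⟩ else 0) i := by
  refine Finset.sum_bij' (fun a _ => (a : ℕ))
    (fun n hn => (⟨n, lt_trans (Finset.mem_range.mp hn) p.isLt⟩ : Fin k)) ?_ ?_ ?_ ?_ ?_
  · intro a ha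
    simp only [Finset.mem_filter, Finset.mem_univ, true_and, Fin.lt_def] at ha
    simpa [Finset.mem_range] using ha
  · intro n hn
    simp only [Finset.mem_filter, Finset.mem_univ, true_and, Fin.lt_def]
    simpa using Finset.mem_range.mp hn
  · intro a ha; ext; rfl
  · intro n hn; rfl
  · intro a ha
    simp [a.isLt]

/-- Second q-factorial-of-order recursion:
    [x]_{s_k,q} = q^(s_k) [x−1]_{s_k,q} + Σ_j q^(s_{j−1}) [r_j]_q [x−1]_{s_k−1,q},
    s_j = r_1 + ⋯ + r_j, s_0 = 0. -/
theorem qFacOrd_recurrence' (q : ℝ) (hq : 0 < q) (hq1 : q ≠ 1)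
    (k x : ℕ) (hk : 1 ≤ k) (hx : 1 ≤ x) (r : Fin k → ℕ) (hr : ∀ j, 1 ≤ r j) :
    qFacOrd q (x : ℤ) (∑ i, r i) =
      q ^ (∑ i, r i) * qFacOrd q ((x : ℤ) - 1) (∑ i, r i) +
      ∑ j : Fin k,
        q ^ (∑ i ∈ Finset.univ.filter (fun i => i < j), r i) *
          qNum q (r j) * qFacOrd q ((x : ℤ) - 1) ((∑ i, r i) - 1) := by
  have hq0 : q ≠ 0 := hq.ne'
  have h1q : (1 : ℝ) - q ≠ 0 := sub_ne_zero.mpr (Ne.symm hq1)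
  set s := ∑ i, r i with hsdef
  have hs : 1 ≤ s := by
    obtain ⟨j0⟩ : Nonempty (Fin k) := ⟨⟨0, hk⟩⟩
    calc 1 ≤ r j0 := hr j0
    _ ≤ s := Finset.single_le_sum (fun i _ => Nat.zero_le _) (Finset.mem_univ j0)
  obtain ⟨n, hn⟩ : ∃ n, s = n + 1 := ⟨s - 1, (Nat.succ_pred_eq_of_pos hs).symm⟩
  set f : ℕ → ℕ := fun m => if h : m < k then r ⟨m, h⟩ else 0 with hf
  -- convert the Fin sum to a range sum and telescope
  have hfin : (∑ j : Fin k,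
        q ^ (∑ i ∈ Finset.univ.filter (fun i => i < j), r i) * qNum q (r j))
      = qNum q (s : ℤ) := by
    have : ∑ i : Fin k, r i = ∑ i ∈ Finset.range k, f i := by
      rw [Finset.sum_range]
      apply Finset.sum_congr rfl
      intro i _
      simp [hf, i.isLt]
    rw [hsdef, this, ← tel q hq0 k f, Finset.sum_range]
    apply Finset.sum_congr rfl
    intro j _
    rw [filter_sum_eq]
    simp [hf, j.isLt]
  -- key scalar identity
  have key : qNum q (x : ℤ) = q ^ s * qNum q ((x : ℤ) - s) + qNum q (s : ℤ) := by
    have hpow : (q ^ s) * q ^ ((x : ℤ) - s) = q ^ x := by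
      rw [← zpow_natCast q x, ← zpow_natCast q s, ← zpow_add₀ hq0]
      congr 1; ring
    unfold qNum
    rw [zpow_natCast, zpow_natCast]
    field_simp
    linear_combination hpow
  -- factor structure
  have hA : qFacOrd q (x : ℤ) s = qNum q (x : ℤ) * qFacOrd q ((x : ℤ) - 1) n := by
    rw [hn]
    unfold qFacOrd
    rw [Finset.prod_range_succ']
    rw [mul_comm]
    congr 1
    apply Finset.prod_congr rfl
    intro i _
    congr 1
    push_cast
    ring
  have hB : qFacOrd q ((x : ℤ) - 1) s
      = qFacOrd q ((x : ℤ) - 1) n * qNum q ((x : ℤ) - s) := by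
    rw [hn]
    unfold qFacOrd
    rw [Finset.prod_range_succ]
    congr 1
    push_cast
    ring
  have hn1 : s - 1 = n := by omega
  rw [hA, hB, hn1]
  rw [← Finset.sum_mul, hfin, key]
  ring
end

section
/- Let q be a real number with 0 < q < 1, let k ≥ 1 and n ≥ 1 be natural numbers, and let x_1, …, x_k be nonnegative real numbers. Then the family indexed by tuples (r_1,…,r_k) ∈ ℕ^k of terms C_q(n + s_k − 1; r_1,…,r_k) · ∏_{j=1}^{k} [ x_j^{r_j} · q^{r_j(r_j−1)/2} / ∏_{i=1}^{s_k − s_{j−1}} (1 + x_j q^{n + i − 1}) ] is summable, and its sum equals ∏_{j=1}^{k} ∏_{i=1}^{n} (1 + x_j q^{i−1}); here s_j = r_1 + ⋯ + r_j with s_0 = 0 and s_k = r_1 + ⋯ + r_k. -/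
open Finset

namespace NegQAux

lemma tri (j : ℕ) : j * (j + 1) / 2 = j * (j - 1) / 2 + j := by
  have h2 : j * (j + 1) = j * (j - 1) + 2 * j := by
    cases j with
    | zero => simp
    | succ n => simp [Nat.succ_sub_one]; ring
  have he1 : 2 ∣ j * (j + 1) := (Nat.even_mul_succ_self j).two_dvd
  have he2 : 2 ∣ j * (j - 1) := by
    cases j with
    | zero => simp
    | succ n => simpa [Nat.succ_sub_one, Nat.mul_comm] using (Nat.even_mul_succ_self n).two_dvd
  omega

variable {q : ℝ}

lemma qNum_natCast (m : ℕ) : qNum q (m : ℤ) = (1 - q ^ m) / (1 - q) := by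
  rw [qNum, zpow_natCast]

lemma qNum_nat_nonneg (hq0 : 0 < q) (hq1 : q < 1) (m : ℕ) : 0 ≤ qNum q (m : ℤ) := by
  rw [qNum_natCast]
  have h1 : q ^ m ≤ 1 := pow_le_one₀ hq0.le hq1.le
  have h2 : (0:ℝ) < 1 - q := by linarith
  exact div_nonneg (by linarith) h2.le

lemma qNum_nat_le (hq0 : 0 < q) (hq1 : q < 1) (m : ℕ) : qNum q (m : ℤ) ≤ 1 / (1 - q) := by
  rw [qNum_natCast]
  have h2 : (0:ℝ) < 1 - q := by linarith
  have h3 : 0 < q ^ m := pow_pos hq0 m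
  rw [div_le_div_iff₀ h2 h2]
  nlinarith

lemma qNum_one_le (hq0 : 0 < q) (hq1 : q < 1) (m : ℕ) : 1 ≤ qNum q ((m + 1 : ℕ) : ℤ) := by
  rw [qNum_natCast]
  have h2 : (0:ℝ) < 1 - q := by linarith
  rw [le_div_iff₀ h2]
  have : q ^ (m + 1) ≤ q ^ 1 := pow_le_pow_of_le_one hq0.le hq1.le (by omega)
  simpa using by linarith

lemma qNum_pos (hq0 : 0 < q) (hq1 : q < 1) (m : ℕ) : 0 < qNum q ((m + 1 : ℕ) : ℤ) :=
  lt_of_lt_of_le one_pos (qNum_one_le hq0 hq1 m)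

lemma qFactorial_succ (n : ℕ) :
    qFactorial q (n + 1) = qFactorial q n * qNum q ((n + 1 : ℕ) : ℤ) := by
  rw [qFactorial, prod_range_succ, ← qFactorial]
  norm_num

lemma qFactorial_one_le (hq0 : 0 < q) (hq1 : q < 1) (n : ℕ) : 1 ≤ qFactorial q n := by
  induction n with
  | zero => simp [qFactorial]
  | succ n ih =>
    rw [qFactorial_succ]
    have h := qNum_one_le hq0 hq1 n
    nlinarith

lemma qFactorial_pos (hq0 : 0 < q) (hq1 : q < 1) (n : ℕ) : 0 < qFactorial q n :=
  lt_of_lt_of_le one_pos (qFactorial_one_le hq0 hq1 n)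

lemma qNum_add (hq0 : 0 < q) (a b : ℕ) :
    qNum q ((a + b : ℕ) : ℤ) = qNum q (a : ℤ) + q ^ a * qNum q (b : ℤ) := by
  rw [qNum_natCast, qNum_natCast, qNum_natCast, ← mul_div_assoc, ← add_div]
  congr 1
  rw [pow_add]
  ring

noncomputable def qb (q : ℝ) (m : ℤ) (r : ℕ) : ℝ := qFacOrd q m r / qFactorial q r

lemma qb_zero (m : ℤ) : qb q m 0 = 1 := by
  simp [qb, qFacOrd, qFactorial]

lemma qFacOrd_succ (m : ℤ) (r : ℕ) :
    qFacOrd q m (r + 1) = qFacOrd q m r * qNum q (m - r) := by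
  rw [qFacOrd, prod_range_succ, ← qFacOrd]

lemma qFacOrd_succ' (m : ℤ) (r : ℕ) :
    qFacOrd q m (r + 1) = qNum q m * qFacOrd q (m - 1) r := by
  rw [qFacOrd, qFacOrd, prod_range_succ']
  simp only [Nat.cast_zero, sub_zero]
  rw [mul_comm]
  congr 1
  apply Finset.prod_congr rfl
  intro i _
  congr 1
  push_cast
  ring

lemma qNum_zero : qNum q 0 = 0 := by simp [qNum]

lemma qb_eq_zero (m r : ℕ) (h : m < r) : qb q (m : ℤ) r = 0 := by
  rw [qb, qFacOrd]
  rw [Finset.prod_eq_zero (Finset.mem_range.mpr h) (by simp [qNum])]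
  simp

lemma pascal (hq0 : 0 < q) (hq1 : q < 1) (a b : ℕ) :
    qb q ((a + b + 1 : ℕ) : ℤ) (b + 1)
      = qb q ((a + b : ℕ) : ℤ) (b + 1) + q ^ a * qb q ((a + b : ℕ) : ℤ) b := by
  have h1 := qFacOrd_succ' (q := q) ((a + b + 1 : ℕ) : ℤ) b
  rw [show ((a + b + 1 : ℕ) : ℤ) - 1 = ((a + b : ℕ) : ℤ) by push_cast; ring] at h1
  have h2 := qFacOrd_succ (q := q) ((a + b : ℕ) : ℤ) b
  rw [show ((a + b : ℕ) : ℤ) - (b : ℤ) = ((a : ℕ) : ℤ) by push_cast; ring] at h2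
  have h3 := qNum_add hq0 a (b + 1)
  rw [show a + (b + 1) = a + b + 1 from by ring] at h3
  have h4 := qFactorial_succ (q := q) b
  have h5 : qNum q ((b + 1 : ℕ) : ℤ) ≠ 0 := (qNum_pos hq0 hq1 b).ne'
  have h6 : qFactorial q b ≠ 0 := (qFactorial_pos hq0 hq1 b).ne'
  rw [qb, qb, qb, h1, h2, h3, h4]
  rw [show (qNum q ((a : ℕ) : ℤ) + q ^ a * qNum q ((b + 1 : ℕ) : ℤ)) * qFacOrd q ((a + b : ℕ) : ℤ) b
      = qFacOrd q ((a + b : ℕ) : ℤ) b * qNum q ((a : ℕ) : ℤ)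
        + q ^ a * qFacOrd q ((a + b : ℕ) : ℤ) b * qNum q ((b + 1 : ℕ) : ℤ) from by ring]
  rw [add_div]
  congr 1
  rw [mul_div_mul_right _ _ h5, mul_div_assoc]

lemma pascal' (hq0 : 0 < q) (hq1 : q < 1) {n j : ℕ} (h : j ≤ n) :
    qb q ((n + 1 : ℕ) : ℤ) (j + 1) = qb q (n : ℤ) (j + 1) + q ^ (n - j) * qb q (n : ℤ) j := by
  have hp := pascal hq0 hq1 (n - j) j
  rw [show n - j + j = n from by omega] at hp
  exact hp

lemma rothe (hq0 : 0 < q) (hq1 : q < 1) (x : ℝ) (n : ℕ) :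
    ∏ i ∈ range n, (1 + x * q ^ i)
      = ∑ j ∈ range (n + 1), qb q (n : ℤ) j * q ^ (j * (j - 1) / 2) * x ^ j := by
  induction n with
  | zero => simp [qb_zero]
  | succ n ih =>
    rw [prod_range_succ, ih]
    rw [sum_range_succ' (fun j => qb q ((n + 1 : ℕ) : ℤ) j * q ^ (j * (j - 1) / 2) * x ^ j) (n + 1)]
    have key : ∀ j ∈ range (n + 1),
        qb q ((n + 1 : ℕ) : ℤ) (j + 1) * q ^ ((j + 1) * (j + 1 - 1) / 2) * x ^ (j + 1)
          = qb q (n : ℤ) (j + 1) * q ^ ((j + 1) * (j + 1 - 1) / 2) * x ^ (j + 1)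
            + qb q (n : ℤ) j * q ^ (j * (j - 1) / 2) * x ^ j * (x * q ^ n) := by
      intro j hj
      have hjn : j ≤ n := Nat.lt_succ_iff.mp (mem_range.mp hj)
      rw [pascal' hq0 hq1 hjn, add_mul, add_mul]
      congr 1
      have t1 : (j + 1) * (j + 1 - 1) / 2 = j * (j - 1) / 2 + j := by
        rw [Nat.add_sub_cancel, Nat.mul_comm]; exact tri j
      calc q ^ (n - j) * qb q (n : ℤ) j * q ^ ((j + 1) * (j + 1 - 1) / 2) * x ^ (j + 1)
          = qb q (n : ℤ) j * q ^ ((n - j) + ((j + 1) * (j + 1 - 1) / 2)) * x ^ (j + 1) := by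
            rw [pow_add]; ring
        _ = qb q (n : ℤ) j * q ^ ((j * (j - 1) / 2) + n) * x ^ (j + 1) := by
            rw [show (n - j) + ((j + 1) * (j + 1 - 1) / 2) = (j * (j - 1) / 2) + n from by omega]
        _ = qb q (n : ℤ) j * q ^ (j * (j - 1) / 2) * x ^ j * (x * q ^ n) := by
            rw [pow_add]; ring
    rw [sum_congr rfl key, sum_add_distrib, ← sum_mul]
    have e2 : ∑ j ∈ range (n + 1), qb q (n : ℤ) (j + 1) * q ^ ((j + 1) * (j + 1 - 1) / 2) * x ^ (j + 1)
        = ∑ j ∈ range (n + 1), qb q (n : ℤ) j * q ^ (j * (j - 1) / 2) * x ^ j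
          + qb q (n : ℤ) (n + 1) * q ^ ((n + 1) * (n + 1 - 1) / 2) * x ^ (n + 1)
          - qb q (n : ℤ) 0 * q ^ (0 * (0 - 1) / 2) * x ^ 0 := by
      rw [← sum_range_succ (fun j => qb q (n : ℤ) j * q ^ (j * (j - 1) / 2) * x ^ j) (n + 1)]
      rw [sum_range_succ' (fun j => qb q (n : ℤ) j * q ^ (j * (j - 1) / 2) * x ^ j) (n + 1)]
      ring
    rw [e2, qb_eq_zero n (n + 1) (by omega)]
    simp only [qb_zero]
    norm_num
    ring

lemma tri' (R : ℕ) : (R + 1) * ((R + 1) - 1) / 2 = R * (R - 1) / 2 + R := by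
  rw [Nat.add_sub_cancel, Nat.mul_comm]; exact tri R

noncomputable def Sig (q x : ℝ) (m R : ℕ) : ℝ :=
  ∑ j ∈ range (m + 1), qb q ((m + R : ℕ) : ℤ) (R + j) * q ^ (j * R + j * (j - 1) / 2) * x ^ j

noncomputable def Pden (q x : ℝ) (m R : ℕ) : ℝ := ∏ i ∈ range R, (1 + x * q ^ (m + 1 + i))

noncomputable def aterm (q x : ℝ) (m r : ℕ) : ℝ :=
  qb q ((m + r : ℕ) : ℤ) r * x ^ r * q ^ (r * (r - 1) / 2) / Pden q x m r

noncomputable def Cfun (q x : ℝ) (m R : ℕ) : ℝ :=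
  (1 + x * q ^ (m + R)) * (x ^ R * q ^ (R * (R - 1) / 2) * Sig q x m R) / Pden q x m R

lemma pascal'' (hq0 : 0 < q) (hq1 : q < 1) {m R j : ℕ} (h : j ≤ m) :
    qb q ((m + (R + 1) : ℕ) : ℤ) (R + 1 + j)
      = qb q ((m + R : ℕ) : ℤ) (R + j + 1) + q ^ (m - j) * qb q ((m + R : ℕ) : ℤ) (R + j) := by
  have hp := pascal hq0 hq1 (m - j) (R + j)
  rw [show (m - j) + (R + j) = m + R from by omega] at hp
  rw [show m + (R + 1) = m + R + 1 from by omega, show R + 1 + j = R + j + 1 from by omega]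
  exact hp

lemma star (hq0 : 0 < q) (hq1 : q < 1) (x : ℝ) (m R : ℕ) :
    (1 + x * q ^ (m + R)) * Sig q x m R - x * q ^ R * Sig q x m (R + 1)
      = qb q ((m + R : ℕ) : ℤ) R := by
  have key : ∀ j ∈ range (m + 1),
      x * q ^ R * (qb q ((m + (R + 1) : ℕ) : ℤ) (R + 1 + j)
          * q ^ (j * (R + 1) + j * (j - 1) / 2) * x ^ j)
        = (qb q ((m + R : ℕ) : ℤ) (R + (j + 1))
            * q ^ ((j + 1) * R + (j + 1) * ((j + 1) - 1) / 2) * x ^ (j + 1))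
          + x * q ^ (m + R)
            * (qb q ((m + R : ℕ) : ℤ) (R + j) * q ^ (j * R + j * (j - 1) / 2) * x ^ j) := by
    intro j hj
    have hjm : j ≤ m := Nat.lt_succ_iff.mp (mem_range.mp hj)
    rw [pascal'' hq0 hq1 hjm]
    rw [add_mul, add_mul, mul_add]
    congr 1
    · have hpow : q ^ R * q ^ (j * (R + 1) + j * (j - 1) / 2)
          = q ^ ((j + 1) * R + (j + 1) * ((j + 1) - 1) / 2) := by
        rw [← pow_add]
        congr 1
        rw [Nat.add_sub_cancel]
        have t1 := tri j
        have h3 : j * (R + 1) = j * R + j := by ring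
        have h4 : (j + 1) * R = j * R + R := by ring
        have h5 : (j + 1) * j = j * (j + 1) := by ring
        rw [h5]
        omega
      rw [show R + (j + 1) = R + j + 1 from by omega]
      linear_combination (x * x ^ j * qb q ((m + R : ℕ) : ℤ) (R + j + 1)) * hpow
    · have hpow : q ^ R * (q ^ (m - j) * q ^ (j * (R + 1) + j * (j - 1) / 2))
          = q ^ (m + R) * q ^ (j * R + j * (j - 1) / 2) := by
        rw [← pow_add, ← pow_add, ← pow_add]
        congr 1
        have h3 : j * (R + 1) = j * R + j := by ring
        omega
      linear_combination (x * x ^ j * qb q ((m + R : ℕ) : ℤ) (R + j)) * hpow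
  have expand : x * q ^ R * Sig q x m (R + 1)
      = Sig q x m R - qb q ((m + R : ℕ) : ℤ) R + x * q ^ (m + R) * Sig q x m R := by
    rw [Sig, mul_sum, sum_congr rfl key, sum_add_distrib]
    congr 1
    · -- ∑ j ∈ range (m+1), g (j+1) = Sig R - qb (m+R) R
      have hg0 : qb q ((m + R : ℕ) : ℤ) (R + 0) * q ^ (0 * R + 0 * (0 - 1) / 2) * x ^ 0
          = qb q ((m + R : ℕ) : ℤ) R := by norm_num
      have hgtop : qb q ((m + R : ℕ) : ℤ) (R + (m + 1))
          * q ^ ((m + 1) * R + (m + 1) * ((m + 1) - 1) / 2) * x ^ (m + 1) = 0 := by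
        rw [qb_eq_zero (m + R) (R + (m + 1)) (by omega)]
        ring
      have hs' := sum_range_succ'
        (fun t => qb q ((m + R : ℕ) : ℤ) (R + t) * q ^ (t * R + t * (t - 1) / 2) * x ^ t) (m + 1)
      have hs := sum_range_succ
        (fun t => qb q ((m + R : ℕ) : ℤ) (R + t) * q ^ (t * R + t * (t - 1) / 2) * x ^ t) (m + 1)
      rw [Sig]
      rw [hgtop] at hs
      rw [hg0] at hs'
      -- hs : ∑_{range(m+2)} g = ∑_{range(m+1)} g + 0
      -- hs' : ∑_{range(m+2)} g = ∑_{range(m+1)} g(t+1) + qb (m+R) R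
      linarith [hs, hs']
    · rw [Sig, mul_sum]
  linarith [expand]

lemma Pden_one_le (hq0 : 0 < q) (hx : 0 ≤ x) (m R : ℕ) : 1 ≤ Pden q x m R := by
  induction R with
  | zero => simp [Pden]
  | succ R ih =>
    rw [Pden, prod_range_succ, ← Pden]
    have h1 : 0 ≤ x * q ^ (m + 1 + R) := by positivity
    nlinarith

lemma Pden_pos (hq0 : 0 < q) (hx : 0 ≤ x) (m R : ℕ) : 0 < Pden q x m R :=
  lt_of_lt_of_le one_pos (Pden_one_le hq0 hx m R)

lemma tele (hq0 : 0 < q) (hq1 : q < 1) {x : ℝ} (hx : 0 ≤ x) (m R : ℕ) :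
    aterm q x m R = Cfun q x m R - Cfun q x m (R + 1) := by
  have hf : (1 + x * q ^ (m + 1 + R)) ≠ 0 := by positivity
  rw [aterm, Cfun, Cfun]
  rw [show Pden q x m (R + 1) = Pden q x m R * (1 + x * q ^ (m + 1 + R)) from prod_range_succ _ _]
  rw [show m + (R + 1) = m + 1 + R from by omega]
  rw [tri']
  rw [show (1 + x * q ^ (m + 1 + R)) * (x ^ (R + 1) * q ^ (R * (R - 1) / 2 + R) * Sig q x m (R + 1))
      = (x ^ (R + 1) * q ^ (R * (R - 1) / 2 + R) * Sig q x m (R + 1)) * (1 + x * q ^ (m + 1 + R))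
      from by ring]
  rw [mul_div_mul_right _ _ hf]
  rw [← sub_div]
  congr 1
  have hs := star hq0 hq1 x m R
  rw [pow_add, pow_succ]
  linear_combination (-(x ^ R * q ^ (R * (R - 1) / 2))) * hs

lemma partialsum (hq0 : 0 < q) (hq1 : q < 1) {x : ℝ} (hx : 0 ≤ x) (m R : ℕ) :
    ∑ r ∈ range R, aterm q x m r = Cfun q x m 0 - Cfun q x m R := by
  induction R with
  | zero => simp
  | succ R ih =>
    rw [sum_range_succ, ih, tele hq0 hq1 hx m R]
    ring

lemma Cfun_zero_eq (hq0 : 0 < q) (hq1 : q < 1) (x : ℝ) (m : ℕ) :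
    Cfun q x m 0 = ∏ i ∈ range (m + 1), (1 + x * q ^ i) := by
  have hS : Sig q x m 0 = ∏ i ∈ range m, (1 + x * q ^ i) := by
    rw [Sig, rothe hq0 hq1 x m]
    apply sum_congr rfl
    intro j hj
    norm_num
  rw [Cfun, hS]
  rw [show Pden q x m 0 = 1 from by simp [Pden]]
  rw [prod_range_succ]
  norm_num
  ring

lemma qFacOrd_nonneg (hq0 : 0 < q) (hq1 : q < 1) {M r : ℕ} (h : r ≤ M) :
    0 ≤ qFacOrd q (M : ℤ) r := by
  rw [qFacOrd]
  apply Finset.prod_nonneg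
  intro i hi
  have hi' : i < r := mem_range.mp hi
  rw [show (M : ℤ) - (i : ℤ) = ((M - i : ℕ) : ℤ) from by omega]
  exact qNum_nat_nonneg hq0 hq1 _

lemma qb_nonneg (hq0 : 0 < q) (hq1 : q < 1) {M r : ℕ} (h : r ≤ M) :
    0 ≤ qb q (M : ℤ) r :=
  div_nonneg (qFacOrd_nonneg hq0 hq1 h) (qFactorial_pos hq0 hq1 r).le

lemma qb_le (hq0 : 0 < q) (hq1 : q < 1) {M r : ℕ} (h : r ≤ M) :
    qb q (M : ℤ) r ≤ (1 / (1 - q)) ^ r := by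
  have h1 : qFacOrd q (M : ℤ) r ≤ (1 / (1 - q)) ^ r := by
    rw [qFacOrd]
    have hb : ∏ i ∈ range r, qNum q ((M : ℤ) - (i : ℤ)) ≤ ∏ _i ∈ range r, (1 / (1 - q)) := by
      apply Finset.prod_le_prod
      · intro i hi
        have hi' : i < r := mem_range.mp hi
        rw [show (M : ℤ) - (i : ℤ) = ((M - i : ℕ) : ℤ) from by omega]
        exact qNum_nat_nonneg hq0 hq1 _
      · intro i hi
        have hi' : i < r := mem_range.mp hi
        rw [show (M : ℤ) - (i : ℤ) = ((M - i : ℕ) : ℤ) from by omega]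
        exact qNum_nat_le hq0 hq1 _
    simpa using hb
  calc qb q (M : ℤ) r ≤ qFacOrd q (M : ℤ) r := by
        rw [qb]
        exact div_le_self (qFacOrd_nonneg hq0 hq1 h) (qFactorial_one_le hq0 hq1 r)
    _ ≤ (1 / (1 - q)) ^ r := h1

lemma Sig_nonneg (hq0 : 0 < q) (hq1 : q < 1) {x : ℝ} (hx : 0 ≤ x) (m R : ℕ) :
    0 ≤ Sig q x m R := by
  apply Finset.sum_nonneg
  intro j hj
  have hjm : j ≤ m := Nat.lt_succ_iff.mp (mem_range.mp hj)
  have h1 : 0 ≤ qb q ((m + R : ℕ) : ℤ) (R + j) := qb_nonneg hq0 hq1 (by omega)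
  positivity

lemma Sig_le (hq0 : 0 < q) (hq1 : q < 1) {x : ℝ} (hx : 0 ≤ x) (m R : ℕ) :
    Sig q x m R ≤ (1 / (1 - q)) ^ R * ∑ j ∈ range (m + 1), (x / (1 - q)) ^ j := by
  rw [Sig, mul_sum]
  apply Finset.sum_le_sum
  intro j hj
  have hjm : j ≤ m := Nat.lt_succ_iff.mp (mem_range.mp hj)
  have hq' : (0:ℝ) < 1 - q := by linarith
  have h1 : qb q ((m + R : ℕ) : ℤ) (R + j) ≤ (1 / (1 - q)) ^ (R + j) :=
    qb_le hq0 hq1 (by omega)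
  have h2 : q ^ (j * R + j * (j - 1) / 2) ≤ 1 := pow_le_one₀ hq0.le hq1.le
  have h3 : 0 ≤ qb q ((m + R : ℕ) : ℤ) (R + j) := qb_nonneg hq0 hq1 (by omega)
  have h4 : (1 / (1 - q)) ^ (R + j) * x ^ j = (1 / (1 - q)) ^ R * (x / (1 - q)) ^ j := by
    rw [pow_add, div_pow, div_pow, div_pow]
    field_simp
    ring
  calc qb q ((m + R : ℕ) : ℤ) (R + j) * q ^ (j * R + j * (j - 1) / 2) * x ^ j
      ≤ (1 / (1 - q)) ^ (R + j) * 1 * x ^ j := by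
        apply mul_le_mul ?_ le_rfl (by positivity) (by positivity)
        apply mul_le_mul h1 h2 (by positivity) (by positivity)
    _ = (1 / (1 - q)) ^ R * (x / (1 - q)) ^ j := by rw [mul_one, h4]

lemma Cfun_nonneg (hq0 : 0 < q) (hq1 : q < 1) {x : ℝ} (hx : 0 ≤ x) (m R : ℕ) :
    0 ≤ Cfun q x m R := by
  rw [Cfun]
  have h1 := Sig_nonneg hq0 hq1 hx m R
  have h2 := (Pden_pos hq0 hx m R)
  positivity

lemma Cfun_le (hq0 : 0 < q) (hq1 : q < 1) {x : ℝ} (hx : 0 ≤ x) (m R : ℕ) :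
    Cfun q x m R ≤ ((1 + x) * ∑ j ∈ range (m + 1), (x / (1 - q)) ^ j)
      * ((x / (1 - q)) ^ R * q ^ (R * (R - 1) / 2)) := by
  have hq' : (0:ℝ) < 1 - q := by linarith
  have hK : 0 ≤ ∑ j ∈ range (m + 1), (x / (1 - q)) ^ j := by positivity
  have hSnn := Sig_nonneg hq0 hq1 hx m R
  have step1 : Cfun q x m R
      ≤ (1 + x * q ^ (m + R)) * (x ^ R * q ^ (R * (R - 1) / 2) * Sig q x m R) := by
    rw [Cfun]
    apply div_le_self ?_ (Pden_one_le hq0 hx m R)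
    positivity
  have hxq : x * q ^ (m + R) ≤ x := by
    have := pow_le_one₀ hq0.le hq1.le (n := m + R)
    nlinarith
  have step2 : (1 + x * q ^ (m + R)) * (x ^ R * q ^ (R * (R - 1) / 2) * Sig q x m R)
      ≤ (1 + x) * (x ^ R * q ^ (R * (R - 1) / 2) * Sig q x m R) := by
    apply mul_le_mul_of_nonneg_right (by linarith)
    positivity
  have step3 : (1 + x) * (x ^ R * q ^ (R * (R - 1) / 2) * Sig q x m R)
      ≤ (1 + x) * (x ^ R * q ^ (R * (R - 1) / 2)
          * ((1 / (1 - q)) ^ R * ∑ j ∈ range (m + 1), (x / (1 - q)) ^ j)) := by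
    apply mul_le_mul_of_nonneg_left ?_ (by linarith)
    apply mul_le_mul_of_nonneg_left (Sig_le hq0 hq1 hx m R) (by positivity)
  have heq : (1 + x) * (x ^ R * q ^ (R * (R - 1) / 2)
          * ((1 / (1 - q)) ^ R * ∑ j ∈ range (m + 1), (x / (1 - q)) ^ j))
      = ((1 + x) * ∑ j ∈ range (m + 1), (x / (1 - q)) ^ j)
          * ((x / (1 - q)) ^ R * q ^ (R * (R - 1) / 2)) := by
    rw [div_pow, div_pow, one_pow]
    field_simp
  linarith

lemma decay (hq0 : 0 < q) (hq1 : q < 1) {y : ℝ} (hy : 0 ≤ y) :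
    Filter.Tendsto (fun R : ℕ => y ^ R * q ^ (R * (R - 1) / 2)) Filter.atTop (nhds 0) := by
  have hhalf : (0:ℝ) < 1 / (2 * (y + 1)) := by positivity
  obtain ⟨N, hN⟩ := exists_pow_lt_of_lt_one hhalf hq1
  have hyN : y * q ^ N ≤ 1 / 2 := by
    have h1 : 0 < q ^ N := pow_pos hq0 N
    have h2 : y * q ^ N ≤ (y + 1) * (1 / (2 * (y + 1))) := by
      have : y * q ^ N ≤ (y + 1) * q ^ N := by nlinarith
      apply this.trans
      apply mul_le_mul_of_nonneg_left hN.le (by linarith)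
    have h3 : (y + 1) * (1 / (2 * (y + 1))) = 1 / 2 := by
      field_simp
    linarith
  set u : ℕ → ℝ := fun R => y ^ R * q ^ (R * (R - 1) / 2) with hu
  have hu0 : ∀ R, 0 ≤ u R := by
    intro R
    simp only [hu]
    positivity
  have hustep : ∀ R, u (R + 1) = u R * (y * q ^ R) := by
    intro R
    simp only [hu]
    rw [tri', pow_add, pow_succ]
    ring
  have hub : ∀ t, u (N + t) ≤ u N * (1 / 2) ^ t := by
    intro t
    induction t with
    | zero => simp
    | succ t ih =>
      have h1 : u (N + (t + 1)) = u (N + t) * (y * q ^ (N + t)) := by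
        rw [show N + (t + 1) = (N + t) + 1 from by omega, hustep]
      have h2 : y * q ^ (N + t) ≤ 1 / 2 := by
        have h3 : q ^ (N + t) ≤ q ^ N := pow_le_pow_of_le_one hq0.le hq1.le (by omega)
        nlinarith [pow_pos hq0 (N + t), pow_pos hq0 N]
      have h4 : 0 ≤ y * q ^ (N + t) := by positivity
      rw [h1, pow_succ]
      have h5 : 0 ≤ u N * (1 / 2) ^ t := by
        have := hu0 N
        positivity
      calc u (N + t) * (y * q ^ (N + t)) ≤ (u N * (1 / 2) ^ t) * (y * q ^ (N + t)) :=
            mul_le_mul_of_nonneg_right ih h4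
        _ ≤ (u N * (1 / 2) ^ t) * (1 / 2) := mul_le_mul_of_nonneg_left h2 h5
        _ = u N * ((1 / 2) ^ t * (1 / 2)) := by ring
  apply squeeze_zero' (g := fun R => u N * (1 / 2) ^ (R - N))
    (Filter.Eventually.of_forall hu0)
  · filter_upwards [Filter.eventually_ge_atTop N] with R hR
    have : u R = u (N + (R - N)) := by congr 1; omega
    rw [this]
    exact hub (R - N)
  · have h6 : Filter.Tendsto (fun R : ℕ => ((1:ℝ) / 2) ^ (R - N)) Filter.atTop (nhds 0) :=
      (tendsto_pow_atTop_nhds_zero_of_lt_one (by norm_num) (by norm_num)).comp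
        (Filter.tendsto_sub_atTop_nat N)
    simpa using h6.const_mul (u N)

lemma Cfun_tendsto (hq0 : 0 < q) (hq1 : q < 1) {x : ℝ} (hx : 0 ≤ x) (m : ℕ) :
    Filter.Tendsto (fun R => Cfun q x m R) Filter.atTop (nhds 0) := by
  have hq' : (0:ℝ) < 1 - q := by linarith
  have hy : 0 ≤ x / (1 - q) := by positivity
  apply squeeze_zero (fun R => Cfun_nonneg hq0 hq1 hx m R) (fun R => Cfun_le hq0 hq1 hx m R)
  simpa using (decay hq0 hq1 hy).const_mul ((1 + x) * ∑ j ∈ range (m + 1), (x / (1 - q)) ^ j)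

lemma onedim (hq0 : 0 < q) (hq1 : q < 1) {x : ℝ} (hx : 0 ≤ x) (m : ℕ) :
    HasSum (fun r => aterm q x m r) (∏ i ∈ range (m + 1), (1 + x * q ^ i)) := by
  have hnn : ∀ r, 0 ≤ aterm q x m r := by
    intro r
    rw [aterm]
    have h1 : 0 ≤ qb q ((m + r : ℕ) : ℤ) r := qb_nonneg hq0 hq1 (by omega)
    have h2 := Pden_pos hq0 hx m r
    positivity
  rw [hasSum_iff_tendsto_nat_of_nonneg hnn]
  have heq : (fun R => ∑ r ∈ range R, aterm q x m r)
      = fun R => Cfun q x m 0 - Cfun q x m R := funext (partialsum hq0 hq1 hx m)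
  rw [heq, ← Cfun_zero_eq hq0 hq1 x m]
  simpa using tendsto_const_nhds.sub (Cfun_tendsto hq0 hq1 hx m)

lemma qFacOrd_add (M : ℤ) (a c : ℕ) :
    qFacOrd q M (a + c) = qFacOrd q M a * qFacOrd q (M - a) c := by
  rw [qFacOrd, qFacOrd, qFacOrd, prod_range_add]
  congr 1
  apply prod_congr rfl
  intro i _
  congr 1
  push_cast
  ring

lemma cons_sum {k : ℕ} (b : ℕ) (rest : Fin k → ℕ) :
    ∑ i, Fin.cons b rest i = b + ∑ i, rest i := by
  simp [Fin.sum_univ_succ]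

lemma cons_filter_sum {k : ℕ} (b : ℕ) (rest : Fin k → ℕ) (j : Fin k) :
    ∑ i' ∈ univ.filter (fun i' => i' < Fin.succ j), Fin.cons b rest i'
      = b + ∑ i' ∈ univ.filter (fun i' => i' < j), rest i' := by
  rw [sum_filter, sum_filter, Fin.sum_univ_succ]
  simp [Fin.succ_lt_succ_iff, Fin.succ_pos]

lemma filter_lt_zero_sum {k : ℕ} (f : Fin (k+1) → ℕ) :
    ∑ i' ∈ univ.filter (fun i' => i' < (0 : Fin (k+1))), f i' = 0 := by
  simp [Fin.not_lt_zero]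

set_option maxHeartbeats 2000000 in
lemma fiber_eq (hq0 : 0 < q) (hq1 : q < 1) {k m : ℕ} (x : Fin (k+1) → ℝ)
    (hx : ∀ j, 0 ≤ x j) (rest : Fin k → ℕ) (b : ℕ) :
    (qMultinomial q (((m + 1 : ℕ) : ℤ) + (∑ i, Fin.cons b rest i) - 1) (Fin.cons b rest) *
      ∏ j : Fin (k+1),
        x j ^ (Fin.cons b rest j) * q ^ ((Fin.cons b rest j) * ((Fin.cons b rest j) - 1) / 2) /
          ∏ i ∈ range
              ((∑ i', Fin.cons b rest i')
                - ∑ i' ∈ univ.filter (fun i' => i' < j), Fin.cons b rest i'),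
            (1 + x j * q ^ (m + 1 + i)))
    = ((qMultinomial q (((m + 1 : ℕ) : ℤ) + (∑ i, rest i) - 1) rest *
        ∏ j : Fin k,
          x (Fin.succ j) ^ rest j * q ^ (rest j * (rest j - 1) / 2) /
            ∏ i ∈ range
                ((∑ i', rest i') - ∑ i' ∈ univ.filter (fun i' => i' < j), rest i'),
              (1 + x (Fin.succ j) * q ^ (m + 1 + i)))
        / (∏ i ∈ range (∑ i, rest i), (1 + x 0 * q ^ (m + 1 + i))))
      * aterm q (x 0) (m + ∑ i, rest i) b := by
  set s' := ∑ i, rest i with hs'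
  -- rewrite the sums over Fin (k+1)
  rw [show (∑ i, Fin.cons b rest i) = b + s' from cons_sum b rest]
  rw [Fin.prod_univ_succ]
  simp only [Fin.cons_zero, Fin.cons_succ, cons_filter_sum, filter_lt_zero_sum,
    Nat.sub_zero, Nat.add_sub_add_left]
  -- handle the multinomial coefficient
  rw [qMultinomial, qMultinomial]
  rw [show (∑ j, Fin.cons b rest j) = b + s' from cons_sum b rest]
  rw [show (∑ j, rest j) = s' from rfl]
  rw [Fin.prod_univ_succ]
  simp only [Fin.cons_zero, Fin.cons_succ]
  rw [show (((m + 1 : ℕ) : ℤ) + (b + s' : ℕ) - 1) = ((m + b + s' : ℕ) : ℤ) from by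
    push_cast; ring]
  rw [show (((m + 1 : ℕ) : ℤ) + (s' : ℕ) - 1) = ((m + s' : ℕ) : ℤ) from by push_cast; ring]
  rw [qFacOrd_add ((m + b + s' : ℕ) : ℤ) b s']
  rw [show (((m + b + s' : ℕ) : ℤ) - (b : ℕ)) = ((m + s' : ℕ) : ℤ) from by push_cast; ring]
  -- split the first denominator product
  rw [show b + s' = s' + b from by omega, prod_range_add]
  have hden : ∀ i, (1 + x 0 * q ^ (m + 1 + (s' + i))) = (1 + x 0 * q ^ (m + s' + 1 + i)) := by
    intro i
    rw [show m + 1 + (s' + i) = m + s' + 1 + i from by omega]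
  simp only [hden]
  -- now pure algebra
  rw [aterm, qb]
  rw [show m + s' + b = m + b + s' from by omega]
  have hP1 : (0:ℝ) < ∏ i ∈ range s', (1 + x 0 * q ^ (m + 1 + i)) := by
    apply prod_pos
    intro i _
    have := hx 0
    positivity
  have hP2 : (0:ℝ) < Pden q (x 0) (m + s') b := Pden_pos hq0 (hx 0) _ _
  have hF1 : qFactorial q b ≠ 0 := (qFactorial_pos hq0 hq1 b).ne'
  have hF2 : (0:ℝ) < ∏ j : Fin k, qFactorial q (rest j) := by
    apply prod_pos
    intro j _
    exact qFactorial_pos hq0 hq1 _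
  rw [Pden]
  field_simp

noncomputable def Tterm (q : ℝ) (m : ℕ) {k : ℕ} (x : Fin k → ℝ) (r : Fin k → ℕ) : ℝ :=
  qMultinomial q (((m + 1 : ℕ) : ℤ) + (∑ i, r i) - 1) r *
    ∏ j : Fin k, x j ^ r j * q ^ (r j * (r j - 1) / 2) /
      ∏ i ∈ range ((∑ i', r i') - ∑ i' ∈ univ.filter (fun i' => i' < j), r i'),
        (1 + x j * q ^ (m + 1 + i))

lemma fiber_eq' (hq0 : 0 < q) (hq1 : q < 1) {k m : ℕ} (x : Fin (k+1) → ℝ)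
    (hx : ∀ j, 0 ≤ x j) (rest : Fin k → ℕ) (b : ℕ) :
    Tterm q m x (Fin.cons b rest)
      = (Tterm q m (fun j => x (Fin.succ j)) rest
          / (∏ i ∈ range (∑ i, rest i), (1 + x 0 * q ^ (m + 1 + i))))
        * aterm q (x 0) (m + ∑ i, rest i) b :=
  fiber_eq hq0 hq1 x hx rest b

lemma Tterm_nonneg (hq0 : 0 < q) (hq1 : q < 1) {k m : ℕ} (x : Fin k → ℝ)
    (hx : ∀ j, 0 ≤ x j) (r : Fin k → ℕ) : 0 ≤ Tterm q m x r := by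
  rw [Tterm]
  apply mul_nonneg
  · rw [qMultinomial]
    apply div_nonneg
    · rw [show (((m + 1 : ℕ) : ℤ) + (∑ i, r i) - 1) = ((m + ∑ i, r i : ℕ) : ℤ) from by
        push_cast; ring]
      rw [show (∑ j, r j) = ∑ i, r i from rfl]
      exact qFacOrd_nonneg hq0 hq1 (by omega)
    · exact prod_nonneg fun j _ => (qFactorial_pos hq0 hq1 _).le
  · apply prod_nonneg
    intro j _
    apply div_nonneg
    · have := hx j
      positivity
    · apply prod_nonneg
      intro i _
      have := hx j
      positivity

set_option maxHeartbeats 2000000 in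
lemma multi (hq0 : 0 < q) (hq1 : q < 1) (m : ℕ) :
    ∀ (k : ℕ) (x : Fin k → ℝ), (∀ j, 0 ≤ x j) →
    HasSum (Tterm q m x) (∏ j, ∏ i ∈ range (m + 1), (1 + x j * q ^ i)) := by
  intro k
  induction k with
  | zero =>
    intro x hx
    have hfun : Tterm q m x = fun _ => (1:ℝ) := by
      funext r
      simp [Tterm, qMultinomial, qFacOrd, qFactorial]
    rw [hfun, show (∏ j : Fin 0, ∏ i ∈ range (m + 1), (1 + x j * q ^ i)) = 1 from by simp]
    simpa using hasSum_single (f := fun _ : Fin 0 → ℕ => (1:ℝ)) (fun i => i.elim0)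
      (fun b' hb' => absurd (Subsingleton.elim b' _) hb')
  | succ k ih =>
    intro x hx
    have hx0 := hx 0
    have hDpos : ∀ rest : Fin k → ℕ,
        (0:ℝ) < ∏ i ∈ range (∑ i, rest i), (1 + x 0 * q ^ (m + 1 + i)) := by
      intro rest
      apply prod_pos
      intro i _
      positivity
    have hfiber : ∀ rest : Fin k → ℕ,
        HasSum (fun b : ℕ => Tterm q m x (Fin.cons b rest))
          ((∏ i ∈ range (m + 1), (1 + x 0 * q ^ i))
            * Tterm q m (fun j => x (Fin.succ j)) rest) := by
      intro rest
      have h1 := (onedim hq0 hq1 hx0 (m + ∑ i, rest i)).mul_left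
        (Tterm q m (fun j => x (Fin.succ j)) rest
          / (∏ i ∈ range (∑ i, rest i), (1 + x 0 * q ^ (m + 1 + i))))
      have h2 : (Tterm q m (fun j => x (Fin.succ j)) rest
            / (∏ i ∈ range (∑ i, rest i), (1 + x 0 * q ^ (m + 1 + i))))
            * ∏ i ∈ range (m + ∑ i, rest i + 1), (1 + x 0 * q ^ i)
          = (∏ i ∈ range (m + 1), (1 + x 0 * q ^ i))
            * Tterm q m (fun j => x (Fin.succ j)) rest := by
        rw [show m + ∑ i, rest i + 1 = (m + 1) + ∑ i, rest i from by omega, prod_range_add]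
        have hD := (hDpos rest).ne'
        field_simp
      rw [h2] at h1
      exact h1.congr_fun fun b => fiber_eq' hq0 hq1 x hx rest b
    have hsum2 : HasSum (fun rest : Fin k → ℕ =>
        (∏ i ∈ range (m + 1), (1 + x 0 * q ^ i)) * Tterm q m (fun j => x (Fin.succ j)) rest)
        (∏ j : Fin (k+1), ∏ i ∈ range (m + 1), (1 + x j * q ^ i)) := by
      have h3 := (ih (fun j => x (Fin.succ j)) (fun j => hx _)).mul_left
        (∏ i ∈ range (m + 1), (1 + x 0 * q ^ i))
      rwa [← Fin.prod_univ_succ (fun j => ∏ i ∈ range (m + 1), (1 + x j * q ^ i))] at h3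
    have hnn : ∀ p : (Fin k → ℕ) × ℕ, 0 ≤ Tterm q m x (Fin.cons p.2 p.1) :=
      fun p => Tterm_nonneg hq0 hq1 x hx _
    have hsummable : Summable (fun p : (Fin k → ℕ) × ℕ => Tterm q m x (Fin.cons p.2 p.1)) := by
      rw [summable_prod_of_nonneg hnn]
      exact ⟨fun rest => (hfiber rest).summable,
        hsum2.summable.congr fun rest => ((hfiber rest).tsum_eq).symm⟩
    have hfw := hsummable.hasSum.prod_fiberwise hfiber
    have hval := hfw.unique hsum2
    have hfinal : HasSum (fun p : (Fin k → ℕ) × ℕ => Tterm q m x (Fin.cons p.2 p.1))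
        (∏ j : Fin (k+1), ∏ i ∈ range (m + 1), (1 + x j * q ^ i)) := hval ▸ hsummable.hasSum
    exact (Equiv.hasSum_iff
        ((((Fin.consEquiv (fun _ : Fin (k+1) => ℕ)).symm).trans (Equiv.prodComm ℕ (Fin k → ℕ))).symm)).mp
      (hfinal.congr_fun fun p => by
        simp [Fin.consEquiv])

end NegQAux

/-- Negative q-multinomial formula: the family indexed by tuples (r_1,…,r_k) ∈ ℕ^k of terms
    C_q(n+s_k−1; r) ∏_j x_j^(r_j) q^(r_j(r_j−1)/2) / ∏_{i=1}^{s_k−s_{j−1}} (1 + x_j q^(n+i−1))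
    has sum ∏_j ∏_{i=1}^n (1 + x_j q^(i−1)). -/
theorem neg_qMultinomial_formula (q : ℝ) (hq0 : 0 < q) (hq1 : q < 1)
    (k n : ℕ) (hk : 1 ≤ k) (hn : 1 ≤ n) (x : Fin k → ℝ) (hx : ∀ j, 0 ≤ x j) :
    HasSum
      (fun r : Fin k → ℕ =>
        qMultinomial q ((n : ℤ) + (∑ i, r i) - 1) r *
          ∏ j : Fin k,
            x j ^ r j * q ^ (r j * (r j - 1) / 2) /
              ∏ i ∈ Finset.range
                  ((∑ i', r i') - ∑ i' ∈ Finset.univ.filter (fun i' => i' < j), r i'),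
                (1 + x j * q ^ (n + i)))
      (∏ j : Fin k, ∏ i ∈ Finset.range n, (1 + x j * q ^ i)) := by
  obtain ⟨m, rfl⟩ : ∃ m, n = m + 1 := ⟨n - 1, by omega⟩
  exact NegQAux.multi hq0 hq1 m k x hx
end
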